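/- arXiv:1103.4965 — 5 statements merged into one kernel-verified Lean document; each statement's English description precedes it below -/
import Mathlib

section
/- Let σ>0, λ>0, T>0, α=log(1+σ), β=σλ. Let f:(0,∞)→ℝ be continuously differentiable and suppose: (i) there exists S₀>0 with ∑_{k=0}^∞ |f(S₀e^{αk−βT})| (λT)^k/k! < ∞; (ii) for every x₀∈(0,∞) there exists ε∈(0,x₀) such that the series ∑_{k=0}^∞ |f'(xe^{αk})| (e^{α}λT)^k/k! converges uniformly for x∈(x₀−ε, x₀+ε). Then for every (t,x)∈[0,T]×(0,∞) the series defining V(t,x) converges, the partial derivative ∂V/∂x(t,x) exists, and ∂V/∂x(t,x) = e^{−(λ+β)(T−t)} ∑_{k=0}^∞ f'(xe^{αk+βt−βT}) (e^{α}λ(T−t))^k/k!. -/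
open Filter Set

private lemma sumfun_mono {g : ℕ → ℝ} (hg : ∀ k, 0 ≤ g k) :
    Monotone fun n => ∑ k ∈ Finset.range n, g k := by
  intro m n hmn
  exact Finset.sum_le_sum_of_subset_of_nonneg (Finset.range_subset_range.mpr hmn) fun k _ _ => hg k

private lemma summable_of_tendsto_partial {g : ℕ → ℝ} (hg : ∀ k, 0 ≤ g k) {L : ℝ}
    (h : Tendsto (fun n => ∑ k ∈ Finset.range n, g k) atTop (nhds L)) : Summable g :=
  summable_of_sum_range_le hg fun n => (sumfun_mono hg).ge_of_tendsto h n

private lemma abs_intervalIntegral_nonneg_eq {h : ℝ → ℝ} (z y : ℝ) (h0 : ∀ s, 0 ≤ h s) :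
    |∫ s in z..y, h s| = ∫ s in (z ⊓ y)..(z ⊔ y), h s := by
  rcases le_total z y with hzy | hzy
  · rw [min_eq_left hzy, max_eq_right hzy,
      abs_of_nonneg (intervalIntegral.integral_nonneg hzy fun u _ => h0 u)]
  · rw [min_eq_right hzy, max_eq_left hzy, intervalIntegral.integral_symm y z, abs_neg,
      abs_of_nonneg (intervalIntegral.integral_nonneg hzy fun u _ => h0 u)]

private lemma exp_mul_pow (α r : ℝ) (k : ℕ) :
    Real.exp (α * (k : ℝ)) * r ^ k = (Real.exp α * r) ^ k := by
  rw [mul_comm α (k : ℝ), Real.exp_nat_mul, ← mul_pow]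

private lemma transfer_summable (α lam T : ℝ) (hlam : 0 < lam) (hT : 0 < T) (f f' : ℝ → ℝ)
    (hfd : ∀ x ∈ Set.Ioi (0 : ℝ), HasDerivAt f (f' x) x)
    (hfc : ContinuousOn f' (Set.Ioi 0))
    {s : Set ℝ} (hs : s ⊆ Set.Ioi 0) (hord : s.OrdConnected)
    (hU : TendstoUniformlyOn
        (fun n x => ∑ k ∈ Finset.range n,
          |f' (x * Real.exp (α * (k : ℝ)))| * (Real.exp α * lam * T) ^ k / (k.factorial : ℝ))
        (fun x => ∑' k : ℕ,
          |f' (x * Real.exp (α * (k : ℝ)))| * (Real.exp α * lam * T) ^ k / (k.factorial : ℝ))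
        atTop s)
    {y z : ℝ} (hy : y ∈ s) (hz : z ∈ s)
    (hzs : Summable fun k : ℕ =>
      |f (z * Real.exp (α * (k : ℝ)))| * (lam * T) ^ k / (k.factorial : ℝ)) :
    Summable fun k : ℕ =>
      |f (y * Real.exp (α * (k : ℝ)))| * (lam * T) ^ k / (k.factorial : ℝ) := by
  set a : ℕ → ℝ → ℝ := fun k x =>
    |f' (x * Real.exp (α * (k : ℝ)))| * (Real.exp α * lam * T) ^ k / (k.factorial : ℝ) with ha
  have hET : (0:ℝ) ≤ Real.exp α * lam * T :=
    mul_nonneg (mul_nonneg (Real.exp_pos α).le hlam.le) hT.le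
  have ha0 : ∀ k x, 0 ≤ a k x := fun k x =>
    div_nonneg (mul_nonneg (abs_nonneg _) (pow_nonneg hET _)) (Nat.cast_nonneg _)
  have hIsub : Set.uIcc z y ⊆ s := hord.uIcc_subset hz hy
  have hIpos : Set.uIcc z y ⊆ Set.Ioi 0 := hIsub.trans hs
  have hcomp : ∀ k : ℕ, ContinuousOn (fun x : ℝ => f' (x * Real.exp (α * (k : ℝ))))
      (Set.uIcc z y) := by
    intro k
    apply hfc.comp (continuous_mul_right _).continuousOn
    intro x hx
    exact Set.mem_Ioi.mpr (mul_pos (hIpos hx) (Real.exp_pos _))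
  have hacont : ∀ k : ℕ, ContinuousOn (a k) (Set.uIcc z y) := fun k =>
    ((hcomp k).abs.mul continuousOn_const).div_const _
  have hw0 : ∀ k : ℕ, (0:ℝ) ≤ (lam * T) ^ k / (k.factorial : ℝ) := fun k =>
    div_nonneg (pow_nonneg (mul_pos hlam hT).le _) (Nat.cast_nonneg _)
  have hftc : ∀ k : ℕ,
      f (y * Real.exp (α * (k : ℝ))) * ((lam * T) ^ k / (k.factorial : ℝ))
        - f (z * Real.exp (α * (k : ℝ))) * ((lam * T) ^ k / (k.factorial : ℝ))
      = ∫ u in z..y, f' (u * Real.exp (α * (k : ℝ))) * Real.exp (α * (k : ℝ))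
          * ((lam * T) ^ k / (k.factorial : ℝ)) := by
    intro k
    have hD : ∀ u ∈ Set.uIcc z y,
        HasDerivAt (fun v => f (v * Real.exp (α * (k : ℝ))) * ((lam * T) ^ k / (k.factorial : ℝ)))
          (f' (u * Real.exp (α * (k : ℝ))) * Real.exp (α * (k : ℝ))
            * ((lam * T) ^ k / (k.factorial : ℝ))) u := by
      intro u hu
      have h1 := (hfd _ (Set.mem_Ioi.mpr (mul_pos (hIpos hu) (Real.exp_pos _)))).comp u
        (hasDerivAt_mul_const (Real.exp (α * (k : ℝ))))
      exact h1.mul_const _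
    have hint : IntervalIntegrable (fun u => f' (u * Real.exp (α * (k : ℝ)))
        * Real.exp (α * (k : ℝ)) * ((lam * T) ^ k / (k.factorial : ℝ)))
        MeasureTheory.volume z y :=
      (((hcomp k).mul continuousOn_const).mul continuousOn_const).intervalIntegrable
    exact (intervalIntegral.integral_eq_sub_of_hasDerivAt hD hint).symm
  have habsD : ∀ k : ℕ, ∀ u : ℝ,
      |f' (u * Real.exp (α * (k : ℝ))) * Real.exp (α * (k : ℝ))
        * ((lam * T) ^ k / (k.factorial : ℝ))| = a k u := by
    intro k u
    show _ = |f' (u * Real.exp (α * (k : ℝ)))| * (Real.exp α * lam * T) ^ k / (k.factorial : ℝ)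
    rw [mul_assoc (Real.exp α) lam T, ← exp_mul_pow, abs_mul, abs_mul,
      abs_of_pos (Real.exp_pos _), abs_of_nonneg (hw0 k)]
    ring
  have hbd : ∀ k : ℕ,
      |f (y * Real.exp (α * (k:ℝ)))| * (lam * T) ^ k / (k.factorial:ℝ)
        ≤ |f (z * Real.exp (α * (k:ℝ)))| * (lam * T) ^ k / (k.factorial:ℝ)
          + |∫ u in z..y, a k u| := by
    intro k
    have hA : |f (y * Real.exp (α * (k:ℝ)))| * (lam * T) ^ k / (k.factorial:ℝ)
        = |f (y * Real.exp (α * (k:ℝ))) * ((lam * T) ^ k / (k.factorial:ℝ))| := by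
      rw [abs_mul, abs_of_nonneg (hw0 k)]; ring
    have hB : |f (z * Real.exp (α * (k:ℝ)))| * (lam * T) ^ k / (k.factorial:ℝ)
        = |f (z * Real.exp (α * (k:ℝ))) * ((lam * T) ^ k / (k.factorial:ℝ))| := by
      rw [abs_mul, abs_of_nonneg (hw0 k)]; ring
    rw [hA, hB]
    have h3 : |f (y * Real.exp (α * (k:ℝ))) * ((lam * T) ^ k / (k.factorial:ℝ))
        - f (z * Real.exp (α * (k:ℝ))) * ((lam * T) ^ k / (k.factorial:ℝ))|
        ≤ |∫ u in z..y, a k u| := by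
      rw [hftc k]
      have h4 := intervalIntegral.norm_integral_le_abs_integral_norm
        (f := fun u => f' (u * Real.exp (α * (k : ℝ))) * Real.exp (α * (k : ℝ))
          * ((lam * T) ^ k / (k.factorial : ℝ))) (a := z) (b := y)
        (μ := MeasureTheory.volume)
      simp only [Real.norm_eq_abs, habsD k] at h4
      exact h4
    calc |f (y * Real.exp (α * (k:ℝ))) * ((lam * T) ^ k / (k.factorial:ℝ))|
        = |f (z * Real.exp (α * (k:ℝ))) * ((lam * T) ^ k / (k.factorial:ℝ))
            + (f (y * Real.exp (α * (k:ℝ))) * ((lam * T) ^ k / (k.factorial:ℝ))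
              - f (z * Real.exp (α * (k:ℝ))) * ((lam * T) ^ k / (k.factorial:ℝ)))| := by
          ring_nf
      _ ≤ _ := (abs_add_le _ _).trans (by exact add_le_add_right h3 _)
  have hbsum : Summable fun k : ℕ => |∫ u in z..y, a k u| := by
    obtain ⟨N, hN⟩ := (Metric.tendstoUniformlyOn_iff.mp hU 1 one_pos).exists
    have huIcc : Set.uIcc (z ⊓ y) (z ⊔ y) = Set.uIcc z y := by
      rw [Set.uIcc_of_le min_le_max]; rfl
    have hsumcont : ∀ n : ℕ, ContinuousOn (fun u => ∑ k ∈ Finset.range n, a k u)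
        (Set.uIcc z y) := fun n => continuousOn_finset_sum _ fun k _ => hacont k
    have hMint : IntervalIntegrable (fun u => ∑ k ∈ Finset.range N, a k u + 1)
        MeasureTheory.volume (z ⊓ y) (z ⊔ y) := by
      apply ContinuousOn.intervalIntegrable; rw [huIcc]
      exact (hsumcont N).add continuousOn_const
    have haint : ∀ k : ℕ, IntervalIntegrable (a k) MeasureTheory.volume (z ⊓ y) (z ⊔ y) := by
      intro k; apply ContinuousOn.intervalIntegrable; rw [huIcc]; exact hacont k
    have hpt : ∀ n : ℕ, ∀ u ∈ Set.Icc (z ⊓ y) (z ⊔ y),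
        ∑ k ∈ Finset.range n, a k u ≤ ∑ k ∈ Finset.range N, a k u + 1 := by
      intro n u hu
      have hus : u ∈ s := hIsub hu
      have hsm : Summable (fun k => a k u) :=
        summable_of_tendsto_partial (fun k => ha0 k u) (hU.tendsto_at hus)
      have h5 := hN u hus
      rw [Real.dist_eq, abs_sub_lt_iff] at h5
      calc ∑ k ∈ Finset.range n, a k u ≤ ∑' k, a k u :=
            Summable.sum_le_tsum _ (fun k _ => ha0 k u) hsm
        _ ≤ ∑ k ∈ Finset.range N, a k u + 1 := by linarith [h5.1]
    apply summable_of_sum_range_le (c := ∫ u in (z ⊓ y)..(z ⊔ y),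
      (∑ k ∈ Finset.range N, a k u + 1)) (fun k => abs_nonneg _)
    intro n
    calc ∑ k ∈ Finset.range n, |∫ u in z..y, a k u|
        = ∑ k ∈ Finset.range n, ∫ u in (z ⊓ y)..(z ⊔ y), a k u :=
          Finset.sum_congr rfl fun k _ => abs_intervalIntegral_nonneg_eq z y (fun u => ha0 k u)
      _ = ∫ u in (z ⊓ y)..(z ⊔ y), ∑ k ∈ Finset.range n, a k u :=
          (intervalIntegral.integral_finset_sum (fun k _ => haint k)).symm
      _ ≤ ∫ u in (z ⊓ y)..(z ⊔ y), (∑ k ∈ Finset.range N, a k u + 1) := by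
          apply intervalIntegral.integral_mono_on min_le_max _ hMint (hpt n)
          apply ContinuousOn.intervalIntegrable; rw [huIcc]; exact hsumcont n
  exact Summable.of_nonneg_of_le
    (fun k => div_nonneg (mul_nonneg (abs_nonneg _) (pow_nonneg (mul_pos hlam hT).le _))
      (Nat.cast_nonneg _)) hbd (hzs.add hbsum)

/- STATEMENT 0: Existence and formula for ∂V/∂x in the Poisson jump model. -/
theorem stmt_0 (σ lam T : ℝ) (hσ : 0 < σ) (hlam : 0 < lam) (hT : 0 < T)
    (α β : ℝ) (hα : α = Real.log (1 + σ)) (hβ : β = σ * lam)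
    (f f' : ℝ → ℝ)
    (hfd : ∀ x ∈ Set.Ioi (0 : ℝ), HasDerivAt f (f' x) x)
    (hfc : ContinuousOn f' (Set.Ioi 0))
    (hi : ∃ S₀ : ℝ, 0 < S₀ ∧ Summable (fun k : ℕ =>
      |f (S₀ * Real.exp (α * (k : ℝ) - β * T))| * (lam * T) ^ k / (k.factorial : ℝ)))
    (hii : ∀ x₀ : ℝ, 0 < x₀ → ∃ ε : ℝ, 0 < ε ∧ ε < x₀ ∧
      TendstoUniformlyOn
        (fun n x => ∑ k ∈ Finset.range n,
          |f' (x * Real.exp (α * (k : ℝ)))| * (Real.exp α * lam * T) ^ k / (k.factorial : ℝ))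
        (fun x => ∑' k : ℕ,
          |f' (x * Real.exp (α * (k : ℝ)))| * (Real.exp α * lam * T) ^ k / (k.factorial : ℝ))
        Filter.atTop (Set.Ioo (x₀ - ε) (x₀ + ε))) :
    ∀ t ∈ Set.Icc (0 : ℝ) T, ∀ x : ℝ, 0 < x →
      Summable (fun k : ℕ =>
        |f (x * Real.exp (α * (k : ℝ) + β * t - β * T))| * (lam * (T - t)) ^ k / (k.factorial : ℝ)) ∧
      HasDerivAt
        (fun y => Real.exp (-(lam * (T - t))) * ∑' k : ℕ,
          f (y * Real.exp (α * (k : ℝ) + β * t - β * T)) * (lam * (T - t)) ^ k / (k.factorial : ℝ))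
        (Real.exp (-((lam + β) * (T - t))) * ∑' k : ℕ,
          f' (x * Real.exp (α * (k : ℝ) + β * t - β * T)) *
            (Real.exp α * lam * (T - t)) ^ k / (k.factorial : ℝ))
        x := by
  obtain ⟨S₀, hS₀, hS₀s⟩ := hi
  have hET : (0:ℝ) ≤ Real.exp α * lam * T :=
    mul_nonneg (mul_nonneg (Real.exp_pos α).le hlam.le) hT.le
  have ha0 : ∀ (k : ℕ) (u : ℝ),
      0 ≤ |f' (u * Real.exp (α * (k : ℝ)))| * (Real.exp α * lam * T) ^ k / (k.factorial : ℝ) :=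
    fun k u => div_nonneg (mul_nonneg (abs_nonneg _) (pow_nonneg hET _)) (Nat.cast_nonneg _)
  -- Step A: global summability of the |f| series with weights (lam*T)^k
  have hbase : Summable fun k : ℕ =>
      |f (Real.exp (Real.log S₀ - β * T) * Real.exp (α * (k : ℝ)))| * (lam * T) ^ k
        / (k.factorial : ℝ) := by
    refine hS₀s.congr fun k => ?_
    rw [show S₀ * Real.exp (α * (k:ℝ) - β * T)
        = Real.exp (Real.log S₀ - β * T) * Real.exp (α * (k:ℝ)) by
      rw [Real.exp_sub, Real.exp_sub, Real.exp_log hS₀]; ring]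
  have keyA : ∀ y : ℝ, 0 < y → Summable fun k : ℕ =>
      |f (y * Real.exp (α * (k : ℝ)))| * (lam * T) ^ k / (k.factorial : ℝ) := by
    set A : Set ℝ := {u : ℝ | Summable fun k : ℕ =>
      |f (Real.exp u * Real.exp (α * (k : ℝ)))| * (lam * T) ^ k / (k.factorial : ℝ)} with hA
    have hprop : ∀ u₀ : ℝ, ∃ U : Set ℝ, IsOpen U ∧ u₀ ∈ U ∧
        (∀ u ∈ U, u₀ ∈ A → u ∈ A) ∧ (∀ u ∈ U, u ∈ A → u₀ ∈ A) := by
      intro u₀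
      obtain ⟨ε, hε, hεlt, hUni⟩ := hii (Real.exp u₀) (Real.exp_pos u₀)
      have hsub : Set.Ioo (Real.exp u₀ - ε) (Real.exp u₀ + ε) ⊆ Set.Ioi 0 := by
        intro v hv; exact Set.mem_Ioi.mpr (by linarith [hv.1])
      have hmem0 : Real.exp u₀ ∈ Set.Ioo (Real.exp u₀ - ε) (Real.exp u₀ + ε) :=
        ⟨by linarith, by linarith⟩
      refine ⟨Real.exp ⁻¹' Set.Ioo (Real.exp u₀ - ε) (Real.exp u₀ + ε),
        isOpen_Ioo.preimage Real.continuous_exp, hmem0, ?_, ?_⟩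
      · intro u hu hA0
        exact transfer_summable α lam T hlam hT f f' hfd hfc hsub Set.ordConnected_Ioo
          hUni hu hmem0 hA0
      · intro u hu hAu
        exact transfer_summable α lam T hlam hT f f' hfd hfc hsub Set.ordConnected_Ioo
          hUni hmem0 hu hAu
    have hAopen : IsOpen A := by
      rw [isOpen_iff_mem_nhds]; intro u₀ hu₀
      obtain ⟨U, hUo, hU0, h1, _⟩ := hprop u₀
      exact Filter.mem_of_superset (hUo.mem_nhds hU0) fun u hu => h1 u hu hu₀
    have hAcopen : IsOpen Aᶜ := by
      rw [isOpen_iff_mem_nhds]; intro u₀ hu₀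
      obtain ⟨U, hUo, hU0, _, h2⟩ := hprop u₀
      exact Filter.mem_of_superset (hUo.mem_nhds hU0) fun u hu hmem => hu₀ (h2 u hu hmem)
    have hclopen : IsClopen A := ⟨isOpen_compl_iff.mp hAcopen, hAopen⟩
    have hAuniv : A = Set.univ := by
      rcases isClopen_iff.mp hclopen with h | h
      · exfalso
        have : (Real.log S₀ - β * T) ∈ A := hbase
        rw [h] at this; exact this
      · exact h
    intro y hy
    have hmem : Real.log y ∈ A := by rw [hAuniv]; trivial
    rw [hA] at hmem
    simp only [Set.mem_setOf_eq, Real.exp_log hy] at hmem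
    exact hmem
  -- Step A': pointwise summability of the |f'| series
  have keyA' : ∀ y : ℝ, 0 < y → Summable fun k : ℕ =>
      |f' (y * Real.exp (α * (k : ℝ)))| * (Real.exp α * lam * T) ^ k / (k.factorial : ℝ) := by
    intro y hy
    obtain ⟨ε, hε, hεlt, hUni⟩ := hii y hy
    exact summable_of_tendsto_partial (fun k => ha0 k y)
      (hUni.tendsto_at ⟨by linarith, by linarith⟩)
  -- main part
  intro t ht x hx
  obtain ⟨ht0, htT⟩ := ht
  have hβpos : 0 < β := hβ ▸ mul_pos hσ hlam
  have hs0 : (0:ℝ) ≤ T - t := sub_nonneg.mpr htT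
  have hls : (0:ℝ) ≤ lam * (T - t) := mul_nonneg hlam.le hs0
  have hc0 : (0:ℝ) < Real.exp (β * t - β * T) := Real.exp_pos _
  have hc1 : Real.exp (β * t - β * T) ≤ 1 := by
    rw [show (1:ℝ) = Real.exp 0 from (Real.exp_zero).symm]
    apply Real.exp_le_exp.mpr; nlinarith
  have harg : ∀ (yy : ℝ) (k : ℕ), yy * Real.exp (α * (k:ℝ) + β * t - β * T)
      = (yy * Real.exp (β * t - β * T)) * Real.exp (α * (k:ℝ)) := by
    intro yy k
    rw [show α * (k:ℝ) + β * t - β * T = (β * t - β * T) + α * (k:ℝ) by ring, Real.exp_add]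
    ring
  have hMsplit : ∀ k : ℕ, Real.exp (α * (k:ℝ) + β * t - β * T)
      = Real.exp (α * (k:ℝ)) * Real.exp (β * t - β * T) := by
    intro k
    rw [← Real.exp_add]; congr 1; ring
  have hmencl : ∀ k : ℕ, Real.exp (α * (k:ℝ) + β * t - β * T) * (lam * (T - t)) ^ k
      ≤ (Real.exp α * lam * T) ^ k := by
    intro k
    calc Real.exp (α * (k:ℝ) + β * t - β * T) * (lam * (T - t)) ^ k
        = Real.exp (β * t - β * T) * (Real.exp (α * (k:ℝ)) * (lam * (T - t)) ^ k) := by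
          rw [hMsplit k]; ring
      _ = Real.exp (β * t - β * T) * (Real.exp α * (lam * (T - t))) ^ k := by
          rw [exp_mul_pow]
      _ ≤ 1 * (Real.exp α * (lam * T)) ^ k := by
          apply mul_le_mul hc1 (pow_le_pow_left₀ (mul_nonneg (Real.exp_pos α).le hls) ?_ k)
            (pow_nonneg (mul_nonneg (Real.exp_pos α).le hls) k) zero_le_one
          apply mul_le_mul_of_nonneg_left ?_ (Real.exp_pos α).le
          nlinarith
      _ = (Real.exp α * lam * T) ^ k := by rw [one_mul, mul_assoc]
  have habs : ∀ (yy : ℝ) (k : ℕ),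
      |f (yy * Real.exp (α * (k:ℝ) + β * t - β * T)) * (lam * (T - t)) ^ k / (k.factorial:ℝ)|
      = |f (yy * Real.exp (α * (k:ℝ) + β * t - β * T))| * (lam * (T - t)) ^ k
          / (k.factorial:ℝ) := by
    intro yy k
    rw [abs_div, abs_mul, abs_of_nonneg (pow_nonneg hls k), Nat.abs_cast]
  -- first conclusion (for arbitrary positive yy)
  have hconc1 : ∀ yy : ℝ, 0 < yy → Summable fun k : ℕ =>
      |f (yy * Real.exp (α * (k:ℝ) + β * t - β * T))| * (lam * (T - t)) ^ k
        / (k.factorial : ℝ) := by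
    intro yy hyy
    refine Summable.of_nonneg_of_le
      (fun k => div_nonneg (mul_nonneg (abs_nonneg _) (pow_nonneg hls _)) (Nat.cast_nonneg _))
      (fun k => ?_) (keyA (yy * Real.exp (β * t - β * T)) (mul_pos hyy hc0))
    rw [harg]
    have hfact : (0:ℝ) < (k.factorial : ℝ) := Nat.cast_pos.mpr k.factorial_pos
    have hpow : (lam * (T - t)) ^ k ≤ (lam * T) ^ k :=
      pow_le_pow_left₀ hls (by nlinarith) k
    exact (div_le_div_iff_of_pos_right hfact).mpr (mul_le_mul_of_nonneg_left hpow (abs_nonneg _))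
  refine ⟨hconc1 x hx, ?_⟩
  -- derivative part
  obtain ⟨ε, hε0, hεlt, hUni⟩ := hii (x * Real.exp (β * t - β * T)) (mul_pos hx hc0)
  have hxcx : x * Real.exp (β * t - β * T) ≤ x := by
    nlinarith
  have hpos_sset : ∀ yy ∈ Set.Ioo (x - ε) (x + ε), 0 < yy := by
    intro yy hyy
    have : ε < x := lt_of_lt_of_le hεlt hxcx
    linarith [hyy.1]
  have hsset : ∀ yy ∈ Set.Ioo (x - ε) (x + ε), yy * Real.exp (β * t - β * T) ∈
      Set.Ioo (x * Real.exp (β * t - β * T) - ε) (x * Real.exp (β * t - β * T) + ε) := by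
    intro yy hyy
    obtain ⟨h1, h2⟩ := hyy
    constructor
    · nlinarith [mul_lt_mul_of_pos_right h1 hc0, mul_le_of_le_one_right hε0.le hc1]
    · nlinarith [mul_lt_mul_of_pos_right h2 hc0, mul_le_of_le_one_right hε0.le hc1]
  -- bound on each derivative term
  have hdk : ∀ (yy : ℝ), 0 < yy → ∀ k : ℕ,
      |f' (yy * Real.exp (α * (k:ℝ) + β * t - β * T)) * Real.exp (α * (k:ℝ) + β * t - β * T)
        * ((lam * (T - t)) ^ k / (k.factorial : ℝ))|
      ≤ |f' ((yy * Real.exp (β * t - β * T)) * Real.exp (α * (k:ℝ)))|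
          * (Real.exp α * lam * T) ^ k / (k.factorial : ℝ) := by
    intro yy hyy k
    rw [harg yy k, abs_mul, abs_mul, abs_of_pos (Real.exp_pos _),
      abs_of_nonneg (div_nonneg (pow_nonneg hls k) (Nat.cast_nonneg _))]
    have hfact : (0:ℝ) < (k.factorial : ℝ) := Nat.cast_pos.mpr k.factorial_pos
    have h6 : |f' (yy * Real.exp (β * t - β * T) * Real.exp (α * (k:ℝ)))|
          * (Real.exp (α * (k:ℝ) + β * t - β * T) * (lam * (T - t)) ^ k)
        ≤ |f' (yy * Real.exp (β * t - β * T) * Real.exp (α * (k:ℝ)))|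
          * (Real.exp α * lam * T) ^ k :=
      mul_le_mul_of_nonneg_left (hmencl k) (abs_nonneg _)
    calc |f' (yy * Real.exp (β * t - β * T) * Real.exp (α * (k:ℝ)))|
          * Real.exp (α * (k:ℝ) + β * t - β * T) * ((lam * (T - t)) ^ k / (k.factorial:ℝ))
        = |f' (yy * Real.exp (β * t - β * T) * Real.exp (α * (k:ℝ)))|
          * (Real.exp (α * (k:ℝ) + β * t - β * T) * (lam * (T - t)) ^ k) / (k.factorial:ℝ) := by
          ring
      _ ≤ |f' (yy * Real.exp (β * t - β * T) * Real.exp (α * (k:ℝ)))|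
          * (Real.exp α * lam * T) ^ k / (k.factorial:ℝ) :=
          (div_le_div_iff_of_pos_right hfact).mpr h6
  -- summability of the signed series on the ball
  have hsum_sgn : ∀ yy ∈ Set.Ioo (x - ε) (x + ε), Summable fun k : ℕ =>
      f (yy * Real.exp (α * (k:ℝ) + β * t - β * T)) * (lam * (T - t)) ^ k
        / (k.factorial : ℝ) := by
    intro yy hyy
    apply Summable.of_abs
    exact (hconc1 yy (hpos_sset yy hyy)).congr fun k => (habs yy k).symm
  have hsum_der : ∀ yy ∈ Set.Ioo (x - ε) (x + ε), Summable fun k : ℕ =>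
      f' (yy * Real.exp (α * (k:ℝ) + β * t - β * T)) * Real.exp (α * (k:ℝ) + β * t - β * T)
        * ((lam * (T - t)) ^ k / (k.factorial : ℝ)) := by
    intro yy hyy
    apply Summable.of_abs
    refine Summable.of_nonneg_of_le (fun k => abs_nonneg _) (fun k => hdk yy (hpos_sset yy hyy) k)
      (keyA' (yy * Real.exp (β * t - β * T)) (mul_pos (hpos_sset yy hyy) hc0))
  -- uniform Cauchy property of the derivative partial sums
  have hkey_dist : ∀ m n : ℕ, n ≤ m → ∀ yy ∈ Set.Ioo (x - ε) (x + ε),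
      dist (∑ k ∈ Finset.range m, f' (yy * Real.exp (α * (k:ℝ) + β * t - β * T))
          * Real.exp (α * (k:ℝ) + β * t - β * T) * ((lam * (T - t)) ^ k / (k.factorial : ℝ)))
        (∑ k ∈ Finset.range n, f' (yy * Real.exp (α * (k:ℝ) + β * t - β * T))
          * Real.exp (α * (k:ℝ) + β * t - β * T) * ((lam * (T - t)) ^ k / (k.factorial : ℝ)))
      ≤ dist (∑ k ∈ Finset.range m,
            |f' ((yy * Real.exp (β * t - β * T)) * Real.exp (α * (k:ℝ)))|
              * (Real.exp α * lam * T) ^ k / (k.factorial : ℝ))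
          (∑ k ∈ Finset.range n,
            |f' ((yy * Real.exp (β * t - β * T)) * Real.exp (α * (k:ℝ)))|
              * (Real.exp α * lam * T) ^ k / (k.factorial : ℝ)) := by
    intro m n hnm yy hyy
    rw [Real.dist_eq, Real.dist_eq, ← Finset.sum_Ico_eq_sub _ hnm, ← Finset.sum_Ico_eq_sub _ hnm]
    calc |∑ k ∈ Finset.Ico n m, f' (yy * Real.exp (α * (k:ℝ) + β * t - β * T))
          * Real.exp (α * (k:ℝ) + β * t - β * T) * ((lam * (T - t)) ^ k / (k.factorial : ℝ))|
        ≤ ∑ k ∈ Finset.Ico n m, |f' (yy * Real.exp (α * (k:ℝ) + β * t - β * T))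
          * Real.exp (α * (k:ℝ) + β * t - β * T) * ((lam * (T - t)) ^ k / (k.factorial : ℝ))| :=
          Finset.abs_sum_le_sum_abs _ _
      _ ≤ ∑ k ∈ Finset.Ico n m, |f' ((yy * Real.exp (β * t - β * T)) * Real.exp (α * (k:ℝ)))|
            * (Real.exp α * lam * T) ^ k / (k.factorial : ℝ) :=
          Finset.sum_le_sum fun k _ => hdk yy (hpos_sset yy hyy) k
      _ ≤ |∑ k ∈ Finset.Ico n m, |f' ((yy * Real.exp (β * t - β * T)) * Real.exp (α * (k:ℝ)))|
            * (Real.exp α * lam * T) ^ k / (k.factorial : ℝ)| := le_abs_self _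
  have hUC : UniformCauchySeqOn (fun n yy => ∑ k ∈ Finset.range n,
      f' (yy * Real.exp (α * (k:ℝ) + β * t - β * T)) * Real.exp (α * (k:ℝ) + β * t - β * T)
        * ((lam * (T - t)) ^ k / (k.factorial : ℝ))) atTop (Set.Ioo (x - ε) (x + ε)) := by
    rw [Metric.uniformCauchySeqOn_iff]
    intro δ hδ
    obtain ⟨N, hN⟩ := Metric.uniformCauchySeqOn_iff.mp hUni.uniformCauchySeqOn δ hδ
    refine ⟨N, fun m hm n hn yy hyy => ?_⟩
    have hyc := hsset yy hyy
    rcases le_total n m with h | h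
    · exact lt_of_le_of_lt (hkey_dist m n h yy hyy) (hN m hm n hn _ hyc)
    · rw [dist_comm]
      exact lt_of_le_of_lt (hkey_dist n m h yy hyy) (hN n hn m hm _ hyc)
  have hTU : TendstoUniformlyOn (fun n yy => ∑ k ∈ Finset.range n,
      f' (yy * Real.exp (α * (k:ℝ) + β * t - β * T)) * Real.exp (α * (k:ℝ) + β * t - β * T)
        * ((lam * (T - t)) ^ k / (k.factorial : ℝ)))
      (fun yy => ∑' k : ℕ,
        f' (yy * Real.exp (α * (k:ℝ) + β * t - β * T)) * Real.exp (α * (k:ℝ) + β * t - β * T)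
          * ((lam * (T - t)) ^ k / (k.factorial : ℝ))) atTop (Set.Ioo (x - ε) (x + ε)) :=
    hUC.tendstoUniformlyOn_of_tendsto fun yy hyy =>
      (hsum_der yy hyy).hasSum.tendsto_sum_nat
  have hder_terms : ∀ n : ℕ, ∀ yy ∈ Set.Ioo (x - ε) (x + ε),
      HasDerivAt (fun y => ∑ k ∈ Finset.range n,
          f (y * Real.exp (α * (k:ℝ) + β * t - β * T)) * (lam * (T - t)) ^ k / (k.factorial : ℝ))
        (∑ k ∈ Finset.range n,
          f' (yy * Real.exp (α * (k:ℝ) + β * t - β * T)) * Real.exp (α * (k:ℝ) + β * t - β * T)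
            * ((lam * (T - t)) ^ k / (k.factorial : ℝ))) yy := by
    intro n yy hyy
    apply HasDerivAt.fun_sum
    intro k _
    have hpos : yy * Real.exp (α * (k:ℝ) + β * t - β * T) ∈ Set.Ioi (0:ℝ) :=
      Set.mem_Ioi.mpr (mul_pos (hpos_sset yy hyy) (Real.exp_pos _))
    have h1 := (hfd _ hpos).comp yy (hasDerivAt_mul_const (Real.exp (α * (k:ℝ) + β * t - β * T)))
    have h2 := (h1.mul_const ((lam * (T - t)) ^ k)).div_const (k.factorial : ℝ)
    simpa [Function.comp, mul_div_assoc] using h2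
  have hmain : HasDerivAt (fun y => ∑' k : ℕ,
      f (y * Real.exp (α * (k:ℝ) + β * t - β * T)) * (lam * (T - t)) ^ k / (k.factorial : ℝ))
      (∑' k : ℕ, f' (x * Real.exp (α * (k:ℝ) + β * t - β * T))
        * Real.exp (α * (k:ℝ) + β * t - β * T) * ((lam * (T - t)) ^ k / (k.factorial : ℝ))) x :=
    hasDerivAt_of_tendstoUniformlyOn isOpen_Ioo hTU
      (Filter.Eventually.of_forall hder_terms)
      (fun yy hyy => (hsum_sgn yy hyy).hasSum.tendsto_sum_nat)
      ⟨by linarith, by linarith⟩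
  have hfinal := hmain.const_mul (Real.exp (-(lam * (T - t))))
  have heq : Real.exp (-((lam + β) * (T - t))) * ∑' k : ℕ,
      f' (x * Real.exp (α * (k:ℝ) + β * t - β * T)) * (Real.exp α * lam * (T - t)) ^ k
        / (k.factorial : ℝ)
      = Real.exp (-(lam * (T - t))) * ∑' k : ℕ,
        f' (x * Real.exp (α * (k:ℝ) + β * t - β * T)) * Real.exp (α * (k:ℝ) + β * t - β * T)
          * ((lam * (T - t)) ^ k / (k.factorial : ℝ)) := by
    have hterm : ∀ k : ℕ,
        f' (x * Real.exp (α * (k:ℝ) + β * t - β * T)) * Real.exp (α * (k:ℝ) + β * t - β * T)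
          * ((lam * (T - t)) ^ k / (k.factorial : ℝ))
        = Real.exp (β * t - β * T) * (f' (x * Real.exp (α * (k:ℝ) + β * t - β * T))
            * (Real.exp α * lam * (T - t)) ^ k / (k.factorial : ℝ)) := by
      intro k
      rw [mul_assoc (Real.exp α) lam (T - t), ← exp_mul_pow, hMsplit k]
      ring
    rw [show (fun k : ℕ => f' (x * Real.exp (α * (k:ℝ) + β * t - β * T))
        * Real.exp (α * (k:ℝ) + β * t - β * T) * ((lam * (T - t)) ^ k / (k.factorial : ℝ)))
      = fun k : ℕ => Real.exp (β * t - β * T) * (f' (x * Real.exp (α * (k:ℝ) + β * t - β * T))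
        * (Real.exp α * lam * (T - t)) ^ k / (k.factorial : ℝ)) from funext hterm]
    rw [tsum_mul_left, ← mul_assoc]
    congr 1
    rw [← Real.exp_add]
    congr 1
    ring
  rw [heq]
  exact hfinal
end

section
/- Let σ>0, λ>0, T>0, α=log(1+σ), β=σλ. Let f:(0,∞)→ℝ be continuously differentiable and suppose: (i) there exists S₀>0 with ∑_{k=0}^∞ |f(S₀e^{αk−βT})| (λT)^k/k! < ∞; (ii) for every x₀∈(0,∞) there exists ε∈(0,x₀) such that the series ∑_{k=0}^∞ |f'(xe^{αk})| (e^{α}λT)^k/k! converges uniformly for x∈(x₀−ε, x₀+ε). Then the function (t,x) ↦ e^{−(λ+β)(T−t)} ∑_{k=0}^∞ f'(xe^{αk+βt−βT}) (e^{α}λ(T−t))^k/k! (which equals ∂V/∂x) is jointly continuous on [0,T]×(0,∞). -/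
open Filter Topology Set


/- STATEMENT 1: Joint continuity of ∂V/∂x on [0,T]×(0,∞) in the Poisson jump model. -/
theorem stmt_1 (σ lam T : ℝ) (hσ : 0 < σ) (hlam : 0 < lam) (hT : 0 < T)
    (α β : ℝ) (hα : α = Real.log (1 + σ)) (hβ : β = σ * lam)
    (f f' : ℝ → ℝ)
    (hfd : ∀ x ∈ Set.Ioi (0 : ℝ), HasDerivAt f (f' x) x)
    (hfc : ContinuousOn f' (Set.Ioi 0))
    (hi : ∃ S₀ : ℝ, 0 < S₀ ∧ Summable (fun k : ℕ =>
      |f (S₀ * Real.exp (α * (k : ℝ) - β * T))| * (lam * T) ^ k / (k.factorial : ℝ)))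
    (hii : ∀ x₀ : ℝ, 0 < x₀ → ∃ ε : ℝ, 0 < ε ∧ ε < x₀ ∧
      TendstoUniformlyOn
        (fun n x => ∑ k ∈ Finset.range n,
          |f' (x * Real.exp (α * (k : ℝ)))| * (Real.exp α * lam * T) ^ k / (k.factorial : ℝ))
        (fun x => ∑' k : ℕ,
          |f' (x * Real.exp (α * (k : ℝ)))| * (Real.exp α * lam * T) ^ k / (k.factorial : ℝ))
        Filter.atTop (Set.Ioo (x₀ - ε) (x₀ + ε))) :
    ContinuousOn
      (fun p : ℝ × ℝ => Real.exp (-((lam + β) * (T - p.1))) * ∑' k : ℕ,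
        f' (p.2 * Real.exp (α * (k : ℝ) + β * p.1 - β * T)) *
          (Real.exp α * lam * (T - p.1)) ^ k / (k.factorial : ℝ))
      (Set.Icc 0 T ×ˢ Set.Ioi 0) := by
  intro p₀ hp₀
  rw [Set.mem_prod] at hp₀
  obtain ⟨hp₀t, hp₀x⟩ := hp₀
  have hp₀x' : (0:ℝ) < p₀.2 := hp₀x
  set S : Set (ℝ × ℝ) := Set.Icc 0 T ×ˢ Set.Ioi 0 with hS
  set φ : ℝ × ℝ → ℝ := fun p => p.2 * Real.exp (β * p.1 - β * T) with hφdef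
  have hφc : Continuous φ := by fun_prop
  have hy₀ : 0 < φ p₀ := mul_pos hp₀x' (Real.exp_pos _)
  obtain ⟨ε, hε, hεlt, hUC⟩ := hii (φ p₀) hy₀
  set J := Set.Ioo (φ p₀ - ε) (φ p₀ + ε) with hJ
  set U : Set (ℝ × ℝ) := φ ⁻¹' J with hUdef
  have hUopen : IsOpen U := isOpen_Ioo.preimage hφc
  have hp₀U : p₀ ∈ U := by
    simp only [hUdef, Set.mem_preimage, hJ, Set.mem_Ioo]
    constructor <;> linarith
  set W : Set (ℝ × ℝ) := U ∩ S with hW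
  set g : ℕ → ℝ × ℝ → ℝ := fun k p =>
    f' (p.2 * Real.exp (α * (k:ℝ) + β * p.1 - β * T)) *
      (Real.exp α * lam * (T - p.1)) ^ k / (k.factorial : ℝ) with hg
  set M : ℕ → ℝ → ℝ := fun k y =>
    |f' (y * Real.exp (α * (k:ℝ)))| * (Real.exp α * lam * T) ^ k / (k.factorial : ℝ) with hM
  have hMnonneg : ∀ (k : ℕ) (y : ℝ), 0 ≤ M k y := by
    intro k y
    apply div_nonneg _ (by positivity)
    exact mul_nonneg (abs_nonneg _) (by positivity)
  have harg : ∀ (k : ℕ) (p : ℝ × ℝ),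
      p.2 * Real.exp (α * (k:ℝ) + β * p.1 - β * T) = φ p * Real.exp (α * (k:ℝ)) := by
    intro k p
    rw [show α * (k:ℝ) + β * p.1 - β * T = (β * p.1 - β * T) + α * (k:ℝ) by ring,
      Real.exp_add, hφdef]
    ring
  have hbound : ∀ (k : ℕ) (p : ℝ × ℝ), p ∈ W → |g k p| ≤ M k (φ p) := by
    intro k p hp
    obtain ⟨hpU, hpS⟩ := hp
    rw [Set.mem_prod] at hpS
    obtain ⟨hpt, hpx⟩ := hpS
    have ht0 : 0 ≤ T - p.1 := by linarith [hpt.2]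
    have htT : T - p.1 ≤ T := by linarith [hpt.1]
    have h1 : |g k p| = |f' (φ p * Real.exp (α * (k:ℝ)))| *
        (Real.exp α * lam * (T - p.1)) ^ k / (k.factorial : ℝ) := by
      rw [hg]
      simp only [harg k p]
      rw [abs_div, abs_mul, abs_of_nonneg (by positivity : (0:ℝ) ≤ ((k.factorial : ℝ))),
        abs_of_nonneg (by positivity : (0:ℝ) ≤ (Real.exp α * lam * (T - p.1)) ^ k)]
    rw [h1, hM]
    have hk : (0:ℝ) < (k.factorial : ℝ) := by positivity
    have hpow : (Real.exp α * lam * (T - p.1)) ^ k ≤ (Real.exp α * lam * T) ^ k :=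
      pow_le_pow_left₀ (by positivity) (mul_le_mul_of_nonneg_left htT (by positivity)) k
    exact (div_le_div_iff_of_pos_right hk).mpr (mul_le_mul_of_nonneg_left hpow (abs_nonneg _))
  set Sn : ℕ → ℝ × ℝ → ℝ := fun n p => ∑ k ∈ Finset.range n, g k p with hSn
  set Mn : ℕ → ℝ → ℝ := fun n y => ∑ k ∈ Finset.range n, M k y with hMn
  have hMC : UniformCauchySeqOn Mn atTop J := hUC.uniformCauchySeqOn
  have hSC : UniformCauchySeqOn Sn atTop W := by
    rw [Metric.uniformCauchySeqOn_iff] at hMC ⊢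
    intro δ hδ
    obtain ⟨N, hN⟩ := hMC δ hδ
    refine ⟨N, fun m hm n hn p hp => ?_⟩
    have hyJ : φ p ∈ J := hp.1
    have key : ∀ a b : ℕ, a ≤ b → dist (Sn a p) (Sn b p) ≤ dist (Mn a (φ p)) (Mn b (φ p)) := by
      intro a b hab
      rw [Real.dist_eq, Real.dist_eq, abs_sub_comm (Sn a p), abs_sub_comm (Mn a _)]
      have h1 : Sn b p - Sn a p = ∑ k ∈ Finset.Ico a b, g k p :=
        (Finset.sum_Ico_eq_sub _ hab).symm
      have h2 : Mn b (φ p) - Mn a (φ p) = ∑ k ∈ Finset.Ico a b, M k (φ p) :=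
        (Finset.sum_Ico_eq_sub _ hab).symm
      rw [h1, h2]
      calc |∑ k ∈ Finset.Ico a b, g k p| ≤ ∑ k ∈ Finset.Ico a b, |g k p| :=
            Finset.abs_sum_le_sum_abs _ _
        _ ≤ ∑ k ∈ Finset.Ico a b, M k (φ p) :=
            Finset.sum_le_sum fun k _ => hbound k p hp
        _ ≤ |∑ k ∈ Finset.Ico a b, M k (φ p)| := le_abs_self _
    rcases le_total m n with h | h
    · exact lt_of_le_of_lt (key m n h) (hN m hm n hn (φ p) hyJ)
    · rw [dist_comm]
      exact lt_of_le_of_lt (key n m h) (hN n hn m hm (φ p) hyJ)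
  have hsummable : ∀ p ∈ W, Summable (fun k => g k p) := by
    intro p hp
    have hyJ : φ p ∈ J := hp.1
    have hMt : Tendsto (fun n => Mn n (φ p)) atTop (𝓝 (∑' k, M k (φ p))) :=
      hUC.tendsto_at hyJ
    have hmono : Monotone fun n => Mn n (φ p) := by
      intro a b hab
      exact Finset.sum_le_sum_of_subset_of_nonneg (Finset.range_subset_range.mpr hab)
        (fun k _ _ => hMnonneg k _)
    have hMsum : Summable (fun k => M k (φ p)) := by
      apply summable_of_sum_range_le (c := ∑' k, M k (φ p)) (fun k => hMnonneg k _)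
      intro n
      exact hmono.ge_of_tendsto hMt n
    have habs : Summable (fun k => |g k p|) :=
      Summable.of_nonneg_of_le (fun k => abs_nonneg _) (fun k => hbound k p hp) hMsum
    exact habs.of_abs
  have hTU : TendstoUniformlyOn Sn (fun p => ∑' k, g k p) atTop W :=
    hSC.tendstoUniformlyOn_of_tendsto fun p hp =>
      (hsummable p hp).hasSum.tendsto_sum_nat
  have hSncont : ∀ n, ContinuousOn (Sn n) W := by
    intro n
    apply continuousOn_finset_sum
    intro k _
    apply ContinuousOn.div_const
    apply ContinuousOn.mul
    · apply hfc.comp (Continuous.continuousOn (by fun_prop))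
      intro p hp
      have hx : 0 < p.2 := hp.2.2
      exact Set.mem_Ioi.mpr (mul_pos hx (Real.exp_pos _))
    · exact Continuous.continuousOn (by fun_prop)
  have htsumcont : ContinuousOn (fun p => ∑' k, g k p) W :=
    hTU.continuousOn (Filter.Eventually.of_forall hSncont).frequently
  have hFcont : ContinuousOn
      (fun p : ℝ × ℝ => Real.exp (-((lam + β) * (T - p.1))) * ∑' k, g k p) W :=
    (Continuous.continuousOn (by fun_prop)).mul htsumcont
  have hp₀W : p₀ ∈ W := ⟨hp₀U, Set.mem_prod.mpr ⟨hp₀t, hp₀x⟩⟩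
  have hWmem : W ∈ 𝓝[S] p₀ :=
    Filter.inter_mem (mem_nhdsWithin_of_mem_nhds (hUopen.mem_nhds hp₀U)) self_mem_nhdsWithin
  exact (hFcont.continuousWithinAt hp₀W).mono_of_mem_nhdsWithin hWmem
end

section
/- Let M∈(0,∞) and let a_k≥0, k=0,1,…, be real numbers with ∑_{k=0}^∞ a_k M^k/k! < ∞. Let N:[0,M]→ℕ be a nondecreasing, right-continuous, integer-valued function with N(0)=0 (so N vanishes on some interval [0,ε] with ε>0). Then the series ∑_{k=0}^∞ a_{k+N(M−x)} x^k/k! converges uniformly in x∈[0,M]. -/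
lemma fact_le_pow_mul_fact (k : ℕ) : ∀ n : ℕ, (k + n).factorial ≤ (k + n) ^ n * k.factorial := by
  intro n
  induction n with
  | zero => simp
  | succ n ih =>
    have h1 : k + (n + 1) = (k + n) + 1 := by ring
    rw [h1, Nat.factorial_succ]
    calc (k + n + 1) * (k + n).factorial ≤ (k + n + 1) * ((k + n) ^ n * k.factorial) :=
          Nat.mul_le_mul_left _ ih
      _ ≤ (k + n + 1) * ((k + n + 1) ^ n * k.factorial) :=
          Nat.mul_le_mul_left _ (Nat.mul_le_mul_right _ (Nat.pow_le_pow_left (by omega) n))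
      _ = (k + n + 1) ^ (n + 1) * k.factorial := by ring

lemma aux_summable (M ε B : ℝ) (hM : 0 < M) (hε0 : 0 < ε) (hεM : ε ≤ M)
    (a : ℕ → ℝ) (ha : ∀ k, 0 ≤ a k) (hB0 : 0 ≤ B)
    (hB : ∀ j : ℕ, a j * M ^ j / (j.factorial : ℝ) ≤ B) (n : ℕ) :
    Summable (fun k : ℕ => a (k + n) * (M - ε) ^ k / (k.factorial : ℝ)) := by
  have hMε : 0 ≤ M - ε := by linarith
  have hq0 : 0 ≤ (M - ε) / M := div_nonneg hMε hM.le
  have hq1 : (M - ε) / M < 1 := by rw [div_lt_one hM]; linarith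
  set q' : ℝ := (1 + (M - ε) / M) / 2 with hq'def
  have hq'0 : 0 < q' := by positivity
  have hq'1 : q' < 1 := by rw [hq'def]; linarith
  have hqε : M - ε ≤ q' * M := by
    have h1 : (M - ε) / M ≤ q' := by rw [hq'def]; linarith
    calc M - ε = (M - ε) / M * M := by field_simp
      _ ≤ q' * M := mul_le_mul_of_nonneg_right h1 hM.le
  have hsq' : Summable (fun k : ℕ => (k : ℝ) ^ n * q' ^ k) :=
    summable_pow_mul_geometric_of_norm_lt_one n
      (by rw [Real.norm_eq_abs, abs_of_nonneg hq'0.le]; exact hq'1)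
  have hshift : Summable (fun k : ℕ => ((k + n : ℕ) : ℝ) ^ n * q' ^ (k + n)) :=
    (summable_nat_add_iff n).2 hsq'
  refine Summable.of_nonneg_of_le
    (fun k => div_nonneg (mul_nonneg (ha _) (pow_nonneg hMε _)) (by positivity)) ?_
    (hshift.mul_left (B / (M ^ n * q' ^ n)))
  intro k
  have hfpos : (0 : ℝ) < (k.factorial : ℝ) := by positivity
  have hfnpos : (0 : ℝ) < ((k + n).factorial : ℝ) := by positivity
  have hDpos : (0 : ℝ) < M ^ n * q' ^ n := by positivity
  have hfact : ((k + n).factorial : ℝ) ≤ ((k + n : ℕ) : ℝ) ^ n * (k.factorial : ℝ) := by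
    exact_mod_cast fact_le_pow_mul_fact k n
  have h2 : a (k + n) * M ^ (k + n) ≤ B * ((k + n).factorial : ℝ) :=
    (div_le_iff₀ hfnpos).1 (hB (k + n))
  have hpow : (M - ε) ^ k ≤ q' ^ k * M ^ k := by
    calc (M - ε) ^ k ≤ (q' * M) ^ k := pow_le_pow_left₀ hMε hqε k
      _ = q' ^ k * M ^ k := mul_pow _ _ _
  have main : a (k + n) * (M - ε) ^ k * (M ^ n * q' ^ n)
      ≤ B * (((k + n : ℕ) : ℝ) ^ n * q' ^ (k + n)) * (k.factorial : ℝ) := by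
    calc a (k + n) * (M - ε) ^ k * (M ^ n * q' ^ n)
        ≤ a (k + n) * (q' ^ k * M ^ k) * (M ^ n * q' ^ n) :=
          mul_le_mul_of_nonneg_right (mul_le_mul_of_nonneg_left hpow (ha _)) hDpos.le
      _ = a (k + n) * M ^ (k + n) * q' ^ (k + n) := by rw [pow_add, pow_add]; ring
      _ ≤ B * ((k + n).factorial : ℝ) * q' ^ (k + n) :=
          mul_le_mul_of_nonneg_right h2 (pow_nonneg hq'0.le _)
      _ ≤ B * (((k + n : ℕ) : ℝ) ^ n * (k.factorial : ℝ)) * q' ^ (k + n) :=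
          mul_le_mul_of_nonneg_right (mul_le_mul_of_nonneg_left hfact hB0) (pow_nonneg hq'0.le _)
      _ = B * (((k + n : ℕ) : ℝ) ^ n * q' ^ (k + n)) * (k.factorial : ℝ) := by ring
  rw [div_le_iff₀ hfpos, div_mul_eq_mul_div, div_mul_eq_mul_div, le_div_iff₀ hDpos]
  calc a (k + n) * (M - ε) ^ k * (M ^ n * q' ^ n)
      ≤ B * (((k + n : ℕ) : ℝ) ^ n * q' ^ (k + n)) * (k.factorial : ℝ) := main
    _ = B * (((k + n : ℕ) : ℝ) ^ n * q' ^ (k + n)) * (k.factorial : ℝ) := by ring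

/- STATEMENT 3: Uniform convergence of the series ∑ a_{k+N(M−x)} x^k/k! on [0,M]
for a nondecreasing, right-continuous, ℕ-valued path N with N(0)=0. -/
theorem stmt_3 (M : ℝ) (hM : 0 < M) (a : ℕ → ℝ) (ha : ∀ k, 0 ≤ a k)
    (hsum : Summable (fun k : ℕ => a k * M ^ k / (k.factorial : ℝ)))
    (N : ℝ → ℕ) (hmono : MonotoneOn N (Set.Icc 0 M))
    (hrc : ∀ x ∈ Set.Ico (0 : ℝ) M, ∃ δ > (0 : ℝ),
      ∀ y ∈ Set.Ico x (x + δ) ∩ Set.Icc 0 M, N y = N x)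
    (hN0 : N 0 = 0) :
    TendstoUniformlyOn
      (fun n x => ∑ k ∈ Finset.range n, a (k + N (M - x)) * x ^ k / (k.factorial : ℝ))
      (fun x => ∑' k : ℕ, a (k + N (M - x)) * x ^ k / (k.factorial : ℝ))
      Filter.atTop (Set.Icc 0 M) := by
  obtain ⟨δ, hδ, hδ0⟩ := hrc 0 ⟨le_refl 0, hM⟩
  have hε0 : 0 < min (δ / 2) M := lt_min (by linarith) hM
  set ε := min (δ / 2) M with hεdef
  have hεM : ε ≤ M := min_le_right _ _
  have hMε : 0 ≤ M - ε := by linarith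
  have hNε : ∀ y ∈ Set.Icc (0 : ℝ) ε, N y = 0 := by
    intro y hy
    rw [← hN0]
    refine hδ0 y ⟨⟨hy.1, ?_⟩, ⟨hy.1, hy.2.trans hεM⟩⟩
    have h1 : y ≤ ε := hy.2
    have h2 : ε ≤ δ / 2 := min_le_left _ _
    linarith
  have hB : ∀ j, a j * M ^ j / (j.factorial : ℝ) ≤ ∑' k, a k * M ^ k / (k.factorial : ℝ) :=
    fun j => Summable.le_tsum hsum j (fun i _ => div_nonneg (mul_nonneg (ha i) (by positivity)) (by positivity))
  have hB0 : 0 ≤ ∑' k, a k * M ^ k / (k.factorial : ℝ) :=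
    le_trans (div_nonneg (mul_nonneg (ha 0) (by positivity)) (by positivity)) (hB 0)
  have key : ∀ n : ℕ, Summable (fun k : ℕ => a (k + n) * (M - ε) ^ k / (k.factorial : ℝ)) :=
    aux_summable M ε _ hM hε0 hεM a ha hB0 hB
  set n0 := N M with hn0
  have hu : Summable (fun k : ℕ => a k * M ^ k / (k.factorial : ℝ)
      + ∑ n ∈ Finset.range (n0 + 1), a (k + n) * (M - ε) ^ k / (k.factorial : ℝ)) :=
    hsum.add (summable_sum (f := fun n k => a (k + n) * (M - ε) ^ k / (k.factorial : ℝ))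
      (fun n _ => key n))
  refine tendstoUniformlyOn_tsum_nat (f := fun k x => a (k + N (M - x)) * x ^ k / (k.factorial : ℝ)) hu ?_
  intro k x hx
  have hx0 : 0 ≤ x := hx.1
  have hxM : x ≤ M := hx.2
  have hMx : M - x ∈ Set.Icc (0 : ℝ) M := ⟨by linarith, by linarith⟩
  have hnle : N (M - x) ≤ n0 := hmono hMx ⟨hM.le, le_refl M⟩ (by linarith)
  have hfpos : (0 : ℝ) < (k.factorial : ℝ) := by positivity
  have hterm0 : 0 ≤ a (k + N (M - x)) * x ^ k / (k.factorial : ℝ) :=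
    div_nonneg (mul_nonneg (ha _) (pow_nonneg hx0 _)) hfpos.le
  rw [Real.norm_eq_abs, abs_of_nonneg hterm0]
  have hsum_nn : (0 : ℝ) ≤ ∑ n ∈ Finset.range (n0 + 1), a (k + n) * (M - ε) ^ k / (k.factorial : ℝ) :=
    Finset.sum_nonneg (fun n _ => div_nonneg (mul_nonneg (ha _) (pow_nonneg hMε _)) hfpos.le)
  have hfirst_nn : 0 ≤ a k * M ^ k / (k.factorial : ℝ) :=
    div_nonneg (mul_nonneg (ha k) (by positivity)) hfpos.le
  rcases Nat.eq_zero_or_pos (N (M - x)) with h0 | hpos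
  · rw [h0, Nat.add_zero]
    have h1 : a k * x ^ k / (k.factorial : ℝ) ≤ a k * M ^ k / (k.factorial : ℝ) := by
      apply div_le_div_of_nonneg_right _ hfpos.le
      exact mul_le_mul_of_nonneg_left (pow_le_pow_left₀ hx0 hxM k) (ha k)
    linarith
  · have hxMε : x ≤ M - ε := by
      by_contra hcon
      push_neg at hcon
      have h : M - x ∈ Set.Icc (0 : ℝ) ε := ⟨by linarith, by linarith⟩
      have := hNε _ h
      omega
    have h1 : a (k + N (M - x)) * x ^ k / (k.factorial : ℝ)
        ≤ a (k + N (M - x)) * (M - ε) ^ k / (k.factorial : ℝ) := by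
      apply div_le_div_of_nonneg_right _ hfpos.le
      exact mul_le_mul_of_nonneg_left (pow_le_pow_left₀ hx0 hxMε k) (ha _)
    have h2 : a (k + N (M - x)) * (M - ε) ^ k / (k.factorial : ℝ)
        ≤ ∑ n ∈ Finset.range (n0 + 1), a (k + n) * (M - ε) ^ k / (k.factorial : ℝ) := by
      refine Finset.single_le_sum (f := fun n => a (k + n) * (M - ε) ^ k / (k.factorial : ℝ))
        (fun n _ => div_nonneg (mul_nonneg (ha _) (pow_nonneg hMε _)) hfpos.le) ?_
      simp only [Finset.mem_range]
      omega
    linarith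
end

section
/- Let λ>0, T>0, x>0 and let 0<τ₁<τ₂<⋯<τ_m<T be given. Define ψ:[0,T]→ℝ by ψ(t) = (x/(λT)) ∏_{j: τ_j<t} (1 + 1/(λ(T−τ_j))) (so ψ ≡ x/(λT) on [0,τ₁] and ψ is constant on each interval (τ_n, τ_{n+1}]), and define M:[0,T]→ℝ by M(t) = x + ∑_{j: τ_j≤t} ψ(τ_j) − λ∫_0^t ψ(u)du. Then for every t∈[0,T], M(t) = (x(T−t)/T) ∏_{j: τ_j≤t} (1 + 1/(λ(T−τ_j))). In particular M(t)≥0 for all t∈[0,T] and M(T)=0. -/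
/- STATEMENT 4: Pathwise computation of the nonnegative local martingale
M = x + ∫ψ d(N−λ·) with M(T)=0 along a Poisson path with jump times τ₁<⋯<τ_m. -/
theorem stmt_4 (lam T x : ℝ) (hlam : 0 < lam) (hT : 0 < T) (hx : 0 < x)
    (m : ℕ) (τ : Fin m → ℝ) (hτm : StrictMono τ) (hτ : ∀ j, 0 < τ j ∧ τ j < T)
    (ψ Mf : ℝ → ℝ)
    (hψ : ∀ t : ℝ, ψ t = x / (lam * T) *
      ∏ j ∈ Finset.univ.filter (fun j : Fin m => τ j < t), (1 + 1 / (lam * (T - τ j))))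
    (hMf : ∀ t : ℝ, Mf t = x +
      (∑ j ∈ Finset.univ.filter (fun j : Fin m => τ j ≤ t), ψ (τ j))
      - lam * ∫ u in (0 : ℝ)..t, ψ u) :
    (∀ t ∈ Set.Icc (0 : ℝ) T,
      Mf t = x * (T - t) / T *
        ∏ j ∈ Finset.univ.filter (fun j : Fin m => τ j ≤ t), (1 + 1 / (lam * (T - τ j))) ∧
      0 ≤ Mf t) ∧
    Mf T = 0 := by
  have hT' : T ≠ 0 := ne_of_gt hT
  have hlam' : lam ≠ 0 := ne_of_gt hlam
  have ha : ∀ j : Fin m, 0 < 1 / (lam * (T - τ j)) := by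
    intro j
    exact one_div_pos.mpr (mul_pos hlam (sub_pos.2 (hτ j).2))
  have ha1 : ∀ j : Fin m, (1 : ℝ) ≤ 1 + 1 / (lam * (T - τ j)) := fun j =>
    le_add_of_nonneg_right (ha j).le
  have hcpos : 0 < x / (lam * T) := div_pos hx (mul_pos hlam hT)
  -- ψ is monotone, hence interval integrable
  have hmono : Monotone ψ := by
    intro t₁ t₂ h
    rw [hψ, hψ]
    refine mul_le_mul_of_nonneg_left ?_ hcpos.le
    have hsub : Finset.univ.filter (fun j : Fin m => τ j < t₁) ⊆
        Finset.univ.filter (fun j : Fin m => τ j < t₂) := by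
      intro j hj
      simp only [Finset.mem_filter, Finset.mem_univ, true_and] at *
      exact lt_of_lt_of_le hj h
    rw [← Finset.prod_sdiff hsub]
    have hdiff : (1:ℝ) ≤ ∏ j ∈ (Finset.univ.filter (fun j : Fin m => τ j < t₂)) \
        (Finset.univ.filter (fun j : Fin m => τ j < t₁)), (1 + 1 / (lam * (T - τ j))) := by
      calc (1:ℝ) = ∏ _j ∈ (Finset.univ.filter (fun j : Fin m => τ j < t₂)) \
          (Finset.univ.filter (fun j : Fin m => τ j < t₁)), (1:ℝ) := by
            rw [Finset.prod_const_one]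
        _ ≤ _ := Finset.prod_le_prod (fun j _ => zero_le_one) (fun j _ => ha1 j)
    exact le_mul_of_one_le_left
      (Finset.prod_nonneg fun j _ => le_trans zero_le_one (ha1 j)) hdiff
  have hint : ∀ a b : ℝ, IntervalIntegrable ψ MeasureTheory.volume a b :=
    fun a b => hmono.intervalIntegrable
  -- integral of ψ over an interval where it is constant
  have hconst : ∀ a b K : ℝ, a ≤ b → (∀ u ∈ Set.Ioc a b, ψ u = K) →
      (∫ u in a..b, ψ u) = K * (b - a) := by
    intro a b K hab h
    have : (∫ u in a..b, ψ u) = ∫ u in a..b, (fun _ => K) u := by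
      apply intervalIntegral.integral_congr_ae
      filter_upwards with u hu
      rw [Set.uIoc_of_le hab] at hu
      exact h u hu
    rw [this, intervalIntegral.integral_const, smul_eq_mul]
    ring
  -- the key induction
  have key : ∀ k : ℕ, ∀ t : ℝ, 0 ≤ t → t ≤ T →
      (Finset.univ.filter (fun j : Fin m => τ j ≤ t)).card = k →
      Mf t = x * (T - t) / T *
        ∏ j ∈ Finset.univ.filter (fun j : Fin m => τ j ≤ t), (1 + 1 / (lam * (T - τ j))) := by
    intro k
    induction k using Nat.strong_induction_on with
    | _ k IH =>
      intro t ht0 htT hcard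
      rcases Finset.eq_empty_or_nonempty
          (Finset.univ.filter (fun j : Fin m => τ j ≤ t)) with hfe | hne
      · -- no jumps up to t
        have hψc : ∀ u ∈ Set.Ioc (0:ℝ) t, ψ u = x / (lam * T) := by
          intro u hu
          rw [hψ]
          have : (Finset.univ.filter (fun j : Fin m => τ j < u)) = ∅ := by
            apply Finset.eq_empty_of_forall_notMem
            intro j hj
            simp only [Finset.mem_filter, Finset.mem_univ, true_and] at hj
            have : j ∈ Finset.univ.filter (fun j : Fin m => τ j ≤ t) := by
              simp only [Finset.mem_filter, Finset.mem_univ, true_and]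
              exact le_of_lt (lt_of_lt_of_le hj hu.2)
            rw [hfe] at this
            exact absurd this (Finset.notMem_empty j)
          rw [this, Finset.prod_empty, mul_one]
        have hI : (∫ u in (0:ℝ)..t, ψ u) = x / (lam * T) * (t - 0) :=
          hconst 0 t _ ht0 hψc
        rw [hMf, hfe, hI, Finset.sum_empty, Finset.prod_empty]
        field_simp
        ring
      · -- there is a last jump s = τ j₀ ≤ t
        obtain ⟨j₀, hj₀mem, hj₀sup⟩ := Finset.exists_mem_eq_sup' hne τ
        set s : ℝ := τ j₀ with hs
        have hsle : ∀ j ∈ Finset.univ.filter (fun j : Fin m => τ j ≤ t), τ j ≤ s := by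
          intro j hj
          exact le_of_le_of_eq (Finset.le_sup' τ hj) hj₀sup
        have hst : s ≤ t := by
          simp only [Finset.mem_filter, Finset.mem_univ, true_and] at hj₀mem
          exact hj₀mem
        have hs0 : 0 < s := (hτ j₀).1
        have hsT : s < T := (hτ j₀).2
        -- the filter at t equals the filter at s
        have hfilts : (Finset.univ.filter (fun j : Fin m => τ j ≤ t)) =
            (Finset.univ.filter (fun j : Fin m => τ j ≤ s)) := by
          ext j
          simp only [Finset.mem_filter, Finset.mem_univ, true_and]
          constructor
          · intro h
            exact hsle j (by simp only [Finset.mem_filter, Finset.mem_univ, true_and]; exact h)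
          · intro h; exact le_trans h hst
        set A : Finset (Fin m) := Finset.univ.filter (fun j : Fin m => τ j < s) with hA
        have hj₀A : j₀ ∉ A := by
          simp only [hA, Finset.mem_filter, Finset.mem_univ, true_and]
          exact lt_irrefl s
        have hins : (Finset.univ.filter (fun j : Fin m => τ j ≤ s)) = insert j₀ A := by
          ext j
          simp only [hA, Finset.mem_filter, Finset.mem_univ, true_and, Finset.mem_insert]
          constructor
          · intro h
            rcases lt_or_eq_of_le h with h | h
            · exact Or.inr h
            · exact Or.inl (hτm.injective h)
          · rintro (rfl | h)
            · exact le_refl _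
            · exact h.le
        have hAcard : A.card + 1 = k := by
          rw [← hcard, hfilts, hins, Finset.card_insert_of_notMem hj₀A]
        -- find r < s with no jumps in (r, s)
        obtain ⟨r, hr0, hrs, hrA⟩ : ∃ r : ℝ, 0 ≤ r ∧ r < s ∧
            ∀ j : Fin m, τ j ≤ r ↔ τ j < s := by
          rcases A.eq_empty_or_nonempty with hAe | hAne
          · refine ⟨0, le_refl 0, hs0, fun j => ⟨fun h => absurd h (not_le.2 (hτ j).1), ?_⟩⟩
            intro h
            have : j ∈ A := by
              simp only [hA, Finset.mem_filter, Finset.mem_univ, true_and]; exact h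
            rw [hAe] at this
            exact absurd this (Finset.notMem_empty j)
          · obtain ⟨j₁, hj₁mem, hj₁sup⟩ := Finset.exists_mem_eq_sup' hAne τ
            have hj₁s : τ j₁ < s := by
              simpa only [hA, Finset.mem_filter, Finset.mem_univ, true_and] using hj₁mem
            refine ⟨τ j₁, (hτ j₁).1.le, hj₁s, fun j => ⟨fun h => lt_of_le_of_lt h hj₁s, ?_⟩⟩
            intro h
            have hjA : j ∈ A := by
              simp only [hA, Finset.mem_filter, Finset.mem_univ, true_and]; exact h
            rw [← hj₁sup]
            exact Finset.le_sup' τ hjA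
        have hfiltr : (Finset.univ.filter (fun j : Fin m => τ j ≤ r)) = A := by
          ext j
          simp only [hA, Finset.mem_filter, Finset.mem_univ, true_and]
          exact hrA j
        -- IH at r
        have hMfr : Mf r = x * (T - r) / T * ∏ j ∈ A, (1 + 1 / (lam * (T - τ j))) := by
          have := IH A.card (by omega) r hr0 (le_of_lt (lt_trans hrs hsT))
            (by rw [hfiltr])
          rw [hfiltr] at this
          exact this
        set Q : ℝ := ∏ j ∈ A, (1 + 1 / (lam * (T - τ j))) with hQ
        set P : ℝ := ∏ j ∈ Finset.univ.filter (fun j : Fin m => τ j ≤ s),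
          (1 + 1 / (lam * (T - τ j))) with hP
        have hPQ : P = (1 + 1 / (lam * (T - s))) * Q := by
          rw [hP, hins, Finset.prod_insert hj₀A]
        -- ψ is constant on (r, s] and on (s, t]
        have hψ1 : ∀ u ∈ Set.Ioc r s, ψ u = x / (lam * T) * Q := by
          intro u hu
          rw [hψ]
          congr 1
          apply Finset.prod_congr _ (fun _ _ => rfl)
          ext j
          simp only [hA, Finset.mem_filter, Finset.mem_univ, true_and]
          constructor
          · intro h; exact lt_of_lt_of_le h hu.2
          · intro h; exact lt_of_le_of_lt ((hrA j).2 h) hu.1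
        have hψ2 : ∀ u ∈ Set.Ioc s t, ψ u = x / (lam * T) * P := by
          intro u hu
          rw [hψ]
          congr 1
          apply Finset.prod_congr _ (fun _ _ => rfl)
          ext j
          simp only [Finset.mem_filter, Finset.mem_univ, true_and]
          constructor
          · intro h
            apply hsle j
            simp only [Finset.mem_filter, Finset.mem_univ, true_and]
            exact le_of_lt (lt_of_lt_of_le h hu.2)
          · intro h; exact lt_of_le_of_lt h hu.1
        have hψs : ψ s = x / (lam * T) * Q := by
          rw [hψ]
        -- split the integral
        have hI1 : (∫ u in r..s, ψ u) = x / (lam * T) * Q * (s - r) :=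
          hconst r s _ hrs.le hψ1
        have hI2 : (∫ u in s..t, ψ u) = x / (lam * T) * P * (t - s) :=
          hconst s t _ hst hψ2
        have hsplit1 : (∫ u in (0:ℝ)..r, ψ u) + (∫ u in r..s, ψ u) = ∫ u in (0:ℝ)..s, ψ u :=
          intervalIntegral.integral_add_adjacent_intervals (hint 0 r) (hint r s)
        have hsplit2 : (∫ u in (0:ℝ)..s, ψ u) + (∫ u in s..t, ψ u) = ∫ u in (0:ℝ)..t, ψ u :=
          intervalIntegral.integral_add_adjacent_intervals (hint 0 s) (hint s t)
        -- the sums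
        have hsum : (∑ j ∈ Finset.univ.filter (fun j : Fin m => τ j ≤ t), ψ (τ j)) =
            ψ s + ∑ j ∈ A, ψ (τ j) := by
          rw [hfilts, hins, Finset.sum_insert hj₀A]
        -- value of the integral up to r from IH
        have hIr : lam * (∫ u in (0:ℝ)..r, ψ u) =
            x + (∑ j ∈ A, ψ (τ j)) - x * (T - r) / T * Q := by
          have h1 := hMf r
          rw [hfiltr, hMfr] at h1
          linarith [h1]
        -- put everything together
        rw [hMf, hsum, ← hsplit2, ← hsplit1, hI1, hI2, hfilts, ← hP, hψs, hPQ]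
        rw [mul_add, mul_add, hIr]
        have hTs : T - s ≠ 0 := sub_ne_zero.2 (ne_of_gt hsT)
        field_simp
        ring
  refine ⟨fun t ht => ⟨key _ t ht.1 ht.2 rfl, ?_⟩, ?_⟩
  · rw [key _ t ht.1 ht.2 rfl]
    have h1 : 0 ≤ x * (T - t) / T := by
      apply div_nonneg _ hT.le
      exact mul_nonneg hx.le (sub_nonneg.2 ht.2)
    exact mul_nonneg h1 (Finset.prod_nonneg fun j _ => le_trans zero_le_one (ha1 j))
  · rw [key _ T hT.le le_rfl rfl, sub_self, mul_zero, zero_div, zero_mul]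
end

section
/- Let λ>0, T>0 and c:ℕ→ℝ with ∑_{k=0}^∞ |c_k| (λT)^k/k! < ∞. For n∈ℕ define g_n(t) = e^{−λ(T−t)} ∑_{k=0}^∞ c_{k+n} (λ(T−t))^k/k!. Then for every n∈ℕ and every t∈(0,T], g_n and g_{n+1} are well defined (the series converge absolutely), g_n is differentiable at t (one-sidedly at t=T), and g_n'(t) = λ( g_n(t) − g_{n+1}(t) ). -/
open Filter

private lemma key_summable (c : ℕ → ℝ) {R : ℝ} (hR : 0 < R)
    (hsum : Summable fun k : ℕ => |c k| * R ^ k / (k.factorial : ℝ))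
    (n : ℕ) {r : ℝ} (hr0 : 0 ≤ r) (hrR : r < R) :
    Summable fun k : ℕ => |c (k + n)| * r ^ k / (k.factorial : ℝ) := by
  have hb : Summable (fun k : ℕ => |c (k + n)| * R ^ (k + n) / ((k + n).factorial : ℝ)) :=
    (summable_nat_add_iff n).mpr hsum
  apply summable_of_isBigO_nat hb
  rw [Asymptotics.isBigO_iff]
  refine ⟨1, ?_⟩
  have hq0 : 0 ≤ r / R := div_nonneg hr0 hR.le
  have hq1 : r / R < 1 := (div_lt_one hR).2 hrR
  have htend := tendsto_pow_const_mul_const_pow_of_lt_one n hq0 hq1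
  have hev : ∀ᶠ k : ℕ in atTop, (k : ℝ) ^ n * (r / R) ^ k < R ^ n / 2 ^ n :=
    htend.eventually (gt_mem_nhds (by positivity))
  filter_upwards [hev, eventually_ge_atTop n] with k hk hkn
  have hfac : ((k + n).factorial : ℝ) ≤ (k.factorial : ℝ) * ((k : ℝ) + (n : ℝ)) ^ n := by
    have h1 : (k + n).factorial ≤ k.factorial * (k + n) ^ n := by
      calc (k + n).factorial = k.factorial * (k + 1).ascFactorial n :=
            (Nat.factorial_mul_ascFactorial k n).symm
        _ ≤ k.factorial * (k + n) ^ n :=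
            Nat.mul_le_mul_left _ (Nat.ascFactorial_le_pow_add k n)
    exact_mod_cast h1
  have h3 : r ^ k = (r / R) ^ k * R ^ k := by
    rw [← mul_pow, div_mul_cancel₀ _ (ne_of_gt hR)]
  have hpow : r ^ k * (((k : ℝ) + (n : ℝ)) ^ n) ≤ R ^ k * R ^ n := by
    have h2 : ((k : ℝ) + (n : ℝ)) ^ n ≤ 2 ^ n * (k : ℝ) ^ n := by
      have hnk : ((k : ℝ) + (n : ℝ)) ≤ 2 * (k : ℝ) := by
        have : (n : ℝ) ≤ (k : ℝ) := by exact_mod_cast hkn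
        linarith
      calc ((k : ℝ) + (n : ℝ)) ^ n ≤ (2 * (k : ℝ)) ^ n :=
            pow_le_pow_left₀ (by positivity) hnk n
        _ = 2 ^ n * (k : ℝ) ^ n := mul_pow 2 _ n
    calc r ^ k * (((k : ℝ) + (n : ℝ)) ^ n)
        = R ^ k * ((r / R) ^ k * (((k : ℝ) + (n : ℝ)) ^ n)) := by rw [h3]; ring
      _ ≤ R ^ k * ((r / R) ^ k * (2 ^ n * (k : ℝ) ^ n)) := by gcongr
      _ = R ^ k * (2 ^ n * ((k : ℝ) ^ n * (r / R) ^ k)) := by ring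
      _ ≤ R ^ k * (2 ^ n * (R ^ n / 2 ^ n)) := by gcongr
      _ = R ^ k * R ^ n := by field_simp
  have hdiv : r ^ k / (k.factorial : ℝ) ≤ R ^ (k + n) / ((k + n).factorial : ℝ) := by
    rw [div_le_div_iff₀ (by positivity) (by positivity)]
    calc r ^ k * ((k + n).factorial : ℝ)
        ≤ r ^ k * ((k.factorial : ℝ) * ((k : ℝ) + (n : ℝ)) ^ n) := by gcongr
      _ = (k.factorial : ℝ) * (r ^ k * ((k : ℝ) + (n : ℝ)) ^ n) := by ring
      _ ≤ (k.factorial : ℝ) * (R ^ k * R ^ n) :=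
          mul_le_mul_of_nonneg_left hpow (by positivity)
      _ = R ^ (k + n) * (k.factorial : ℝ) := by rw [pow_add]; ring
  have hnn1 : (0:ℝ) ≤ |c (k + n)| * r ^ k / (k.factorial : ℝ) := by positivity
  have hnn2 : (0:ℝ) ≤ |c (k + n)| * R ^ (k + n) / ((k + n).factorial : ℝ) := by positivity
  rw [Real.norm_eq_abs, Real.norm_eq_abs, abs_of_nonneg hnn1, abs_of_nonneg hnn2, one_mul,
    mul_div_assoc, mul_div_assoc]
  gcongr

private lemma key_summable2 (c : ℕ → ℝ) {R : ℝ} (hR : 0 < R)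
    (hsum : Summable fun k : ℕ => |c k| * R ^ k / (k.factorial : ℝ))
    (n : ℕ) {r : ℝ} (hr0 : 0 ≤ r) (hrR : r < R) :
    Summable fun k : ℕ => |c (k + n)| * (k : ℝ) * r ^ (k - 1) / (k.factorial : ℝ) := by
  have h := key_summable c hR hsum (n + 1) hr0 hrR
  rw [← summable_nat_add_iff 1]
  refine h.congr fun k => ?_
  have h1 : k + 1 + n = k + (n + 1) := by omega
  have h2 : ((k + 1).factorial : ℝ) = ((k : ℝ) + 1) * (k.factorial : ℝ) := by
    rw [Nat.factorial_succ]; push_cast; ring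
  have h3 : (k.factorial : ℝ) ≠ 0 := by positivity
  rw [h1, Nat.add_sub_cancel, h2]
  push_cast
  field_simp

theorem stmt_5 (lam T : ℝ) (hlam : 0 < lam) (hT : 0 < T) (c : ℕ → ℝ)
    (hsum : Summable (fun k : ℕ => |c k| * (lam * T) ^ k / (k.factorial : ℝ)))
    (g : ℕ → ℝ → ℝ)
    (hg : ∀ (n : ℕ) (t : ℝ), g n t = Real.exp (-(lam * (T - t))) *
      ∑' k : ℕ, c (k + n) * (lam * (T - t)) ^ k / (k.factorial : ℝ)) :
    ∀ n : ℕ, ∀ t ∈ Set.Ioc (0 : ℝ) T,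
      Summable (fun k : ℕ => |c (k + n)| * (lam * (T - t)) ^ k / (k.factorial : ℝ)) ∧
      Summable (fun k : ℕ => |c (k + (n + 1))| * (lam * (T - t)) ^ k / (k.factorial : ℝ)) ∧
      HasDerivWithinAt (g n) (lam * (g n t - g (n + 1) t)) (Set.Iic T) t ∧
      (t < T → HasDerivAt (g n) (lam * (g n t - g (n + 1) t)) t) := by
  intro n t ht
  obtain ⟨ht0, htT⟩ := ht
  have hR : (0:ℝ) < lam * T := by positivity
  have hx0 : 0 ≤ lam * (T - t) := by nlinarith
  have hxR : lam * (T - t) < lam * T := by nlinarith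
  set F : ℕ → ℕ → ℝ → ℝ := fun m k y =>
    Real.exp (-(lam * (T - y))) * (c (k + m) * (lam * (T - y)) ^ k / (k.factorial : ℝ))
    with hFdef
  have hgF : ∀ m y, g m y = ∑' k, F m k y := by
    intro m y
    rw [hg m y, ← tsum_mul_left]
  set B : ℕ → ℝ → ℝ := fun k y =>
    Real.exp (-(lam * (T - y))) *
      (c (k + n) * (k : ℝ) * (lam * (T - y)) ^ (k - 1) / (k.factorial : ℝ)) with hBdef
  set F' : ℕ → ℝ → ℝ := fun k y => lam * F n k y - lam * B k y with hF'def
  set r : ℝ := lam * (T - t / 2) with hrdef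
  have hr0 : 0 ≤ r := by nlinarith
  have hrR : r < lam * T := by nlinarith
  set s : Set ℝ := Set.Ioo (t / 2) (2 * T - t / 2) with hsdef
  have hts : t ∈ s := ⟨by linarith, by linarith⟩
  have hXr : ∀ y ∈ s, |lam * (T - y)| ≤ r := by
    intro y hy
    obtain ⟨hy1, hy2⟩ := hy
    rw [abs_mul, abs_of_pos hlam, hrdef]
    have h1 : |T - y| ≤ T - t / 2 := by
      rw [abs_le]
      constructor <;> nlinarith
    exact mul_le_mul_of_nonneg_left h1 hlam.le
  have hE : ∀ y ∈ s, Real.exp (-(lam * (T - y))) ≤ Real.exp (lam * T) := by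
    intro y hy
    apply Real.exp_le_exp.2
    calc -(lam * (T - y)) ≤ |lam * (T - y)| := neg_le_abs _
      _ ≤ r := hXr y hy
      _ ≤ lam * T := hrR.le
  set u : ℕ → ℝ := fun k => (Real.exp (lam * T) * lam) *
    (|c (k + n)| * r ^ k / (k.factorial : ℝ) +
      |c (k + n)| * (k : ℝ) * r ^ (k - 1) / (k.factorial : ℝ)) with hudef
  have hu : Summable u :=
    ((key_summable c hR hsum n hr0 hrR).add (key_summable2 c hR hsum n hr0 hrR)).mul_left _
  have hderiv : ∀ k : ℕ, ∀ y, y ∈ s → HasDerivAt (F n k) (F' k y) y := by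
    intro k y _
    have hX : HasDerivAt (fun z : ℝ => lam * (T - z)) (-lam) y := by
      simpa using ((hasDerivAt_id y).const_sub T).const_mul lam
    have hexp : HasDerivAt (fun z : ℝ => Real.exp (-(lam * (T - z))))
        (Real.exp (-(lam * (T - y))) * lam) y := by
      simpa using (hX.neg).exp
    have hpw : HasDerivAt (fun z : ℝ => c (k + n) * (lam * (T - z)) ^ k / (k.factorial : ℝ))
        ((c (k + n) * ((k : ℝ) * (lam * (T - y)) ^ (k - 1) * (-lam))) / (k.factorial : ℝ)) y :=
      ((hX.pow k).const_mul (c (k + n))).div_const _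
    have hm := hexp.mul hpw
    have : HasDerivAt (F n k)
        (Real.exp (-(lam * (T - y))) * lam *
            (c (k + n) * (lam * (T - y)) ^ k / (k.factorial : ℝ)) +
          Real.exp (-(lam * (T - y))) *
            ((c (k + n) * ((k : ℝ) * (lam * (T - y)) ^ (k - 1) * (-lam))) / (k.factorial : ℝ))) y := by
      simp only [hFdef]
      exact hm
    convert this using 1
    simp only [hF'def, hFdef, hBdef]
    ring
  have hbound : ∀ k : ℕ, ∀ y, y ∈ s → ‖F' k y‖ ≤ u k := by
    intro k y hy
    have hfk : (0:ℝ) ≤ (k.factorial : ℝ) := by positivity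
    have h1 : ‖F n k y‖ ≤ Real.exp (lam * T) * (|c (k + n)| * r ^ k / (k.factorial : ℝ)) := by
      simp only [hFdef]
      rw [Real.norm_eq_abs, abs_mul, abs_of_pos (Real.exp_pos _), abs_div, abs_mul, abs_pow,
        abs_of_nonneg hfk]
      gcongr
      · calc -(lam * (T - y)) ≤ |lam * (T - y)| := neg_le_abs _
          _ ≤ r := hXr y hy
          _ ≤ lam * T := hrR.le
      · exact hXr y hy
    have h2 : ‖B k y‖ ≤
        Real.exp (lam * T) * (|c (k + n)| * (k : ℝ) * r ^ (k - 1) / (k.factorial : ℝ)) := by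
      simp only [hBdef]
      rw [Real.norm_eq_abs, abs_mul, abs_of_pos (Real.exp_pos _), abs_div, abs_mul, abs_mul,
        abs_pow, abs_of_nonneg hfk, Nat.abs_cast]
      gcongr
      · calc -(lam * (T - y)) ≤ |lam * (T - y)| := neg_le_abs _
          _ ≤ r := hXr y hy
          _ ≤ lam * T := hrR.le
      · exact hXr y hy
    have hA1 : ‖lam * F n k y‖ ≤
        lam * (Real.exp (lam * T) * (|c (k + n)| * r ^ k / (k.factorial : ℝ))) := by
      rw [norm_mul, Real.norm_eq_abs lam, abs_of_pos hlam]
      exact mul_le_mul_of_nonneg_left h1 hlam.le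
    have hA2 : ‖lam * B k y‖ ≤
        lam * (Real.exp (lam * T) *
          (|c (k + n)| * (k : ℝ) * r ^ (k - 1) / (k.factorial : ℝ))) := by
      rw [norm_mul, Real.norm_eq_abs lam, abs_of_pos hlam]
      exact mul_le_mul_of_nonneg_left h2 hlam.le
    calc ‖F' k y‖ ≤ ‖lam * F n k y‖ + ‖lam * B k y‖ := norm_sub_le _ _
      _ ≤ lam * (Real.exp (lam * T) * (|c (k + n)| * r ^ k / (k.factorial : ℝ))) +
          lam * (Real.exp (lam * T) *
            (|c (k + n)| * (k : ℝ) * r ^ (k - 1) / (k.factorial : ℝ))) :=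
          add_le_add hA1 hA2
      _ = u k := by simp only [hudef]; ring
  have hxa : Summable (fun k => |c (k + n)| * (lam * (T - t)) ^ k / (k.factorial : ℝ)) :=
    key_summable c hR hsum n hx0 hxR
  have hA : Summable (fun k => F n k t) := by
    have h0 : Summable (fun k => c (k + n) * (lam * (T - t)) ^ k / (k.factorial : ℝ)) := by
      apply summable_abs_iff.mp
      refine hxa.congr fun k => ?_
      rw [abs_div, abs_mul, abs_pow, abs_of_nonneg hx0,
        abs_of_nonneg (by positivity : (0:ℝ) ≤ (k.factorial : ℝ))]
    simp only [hFdef]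
    exact h0.mul_left _
  have hkey := hasDerivAt_tsum_of_isPreconnected hu isOpen_Ioo isPreconnected_Ioo
    hderiv hbound hts hA hts
  have hgfun : g n = fun z => ∑' k, F n k z := funext fun z => hgF n z
  have hB : Summable (fun k => B k t) := by
    have hxb : Summable
        (fun k => |c (k + n)| * (k : ℝ) * (lam * (T - t)) ^ (k - 1) / (k.factorial : ℝ)) :=
      key_summable2 c hR hsum n hx0 hxR
    apply summable_abs_iff.mp
    refine (hxb.mul_left (Real.exp (-(lam * (T - t))))).congr fun k => ?_
    simp only [hBdef]
    rw [abs_mul, abs_of_pos (Real.exp_pos _), abs_div, abs_mul, abs_mul, abs_pow,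
      abs_of_nonneg hx0, Nat.abs_cast,
      abs_of_nonneg (by positivity : (0:ℝ) ≤ (k.factorial : ℝ))]
  have hBsum : ∑' k, B k t = g (n + 1) t := by
    rw [Summable.tsum_eq_zero_add hB]
    have hB0 : B 0 t = 0 := by simp [hBdef]
    rw [hB0, zero_add, hgF (n + 1) t]
    refine tsum_congr fun k => ?_
    simp only [hBdef, hFdef]
    have e1 : k + 1 + n = k + (n + 1) := by omega
    have e2 : ((k + 1).factorial : ℝ) = ((k : ℝ) + 1) * (k.factorial : ℝ) := by
      rw [Nat.factorial_succ]; push_cast; ring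
    have h3 : (k.factorial : ℝ) ≠ 0 := by positivity
    rw [e1, Nat.add_sub_cancel, e2]
    push_cast
    field_simp
  have hvals : ∑' k, F' k t = lam * (g n t - g (n + 1) t) := by
    calc ∑' k, F' k t = ∑' k, (lam * F n k t - lam * B k t) := rfl
      _ = (∑' k, lam * F n k t) - ∑' k, lam * B k t :=
          Summable.tsum_sub (hA.mul_left lam) (hB.mul_left lam)
      _ = lam * (∑' k, F n k t) - lam * ∑' k, B k t := by
          have hm1 : ∑' k, lam * F n k t = lam * ∑' k, F n k t := tsum_mul_left
          have hm2 : ∑' k, lam * B k t = lam * ∑' k, B k t := tsum_mul_left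
          rw [hm1, hm2]
      _ = lam * (g n t - g (n + 1) t) := by rw [← hgF n t, hBsum]; ring
  have hmain : HasDerivAt (g n) (lam * (g n t - g (n + 1) t)) t := by
    rw [← hvals, hgfun]
    exact hkey
  exact ⟨hxa, key_summable c hR hsum (n + 1) hx0 hxR, hmain.hasDerivWithinAt, fun _ => hmain⟩
end
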